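/- arXiv:1901.03348 — 3 statements merged into one kernel-verified Lean document; each statement's English description precedes it below -/
import Mathlib

section
/- Let Y_1, ..., Y_k be complex-valued random variables with E|Y_m|^2 < ∞ for each m, forming a 1-dependent sequence. Define the cumulant-type functionals Ê recursively by Ê(Y_1) = E Y_1 and Ê(Y_1,...,Y_k) = E(Y_1⋯Y_k) − Σ_{j=1}^{k-1} Ê(Y_1,...,Y_j) E(Y_{j+1}⋯Y_k). Then |Ê(Y_1,...,Y_k)| ≤ 2^{k-1} ∏_{m=1}^k (E|Y_m|^2)^{1/2}. -/
open MeasureTheory Finset ProbabilityTheory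

/-- Heinrich's mixed cumulant functional Ê: `heinrichE μ Y k` corresponds to
`Ê(Y 0, Y 1, ..., Y k)` (so `k+1` variables). -/
noncomputable def heinrichE {Ω : Type*} [MeasurableSpace Ω] (μ : Measure Ω)
    (Y : ℕ → Ω → ℂ) : ℕ → ℂ
  | k =>
    (∫ ω, ∏ m ∈ Finset.range (k + 1), Y m ω ∂μ) -
      ∑ j ∈ (Finset.range k).attach,
        heinrichE μ Y j.1 * ∫ ω, ∏ m ∈ Finset.Icc (j.1 + 1) k, Y m ω ∂μ
  termination_by k => k
  decreasing_by exact Finset.mem_range.mp j.2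

/-- The sequence `Y` is 1-dependent: for `s + 1 < t`, the σ-algebra generated by
`Y 0, ..., Y s` is independent of the one generated by `Y t, Y (t+1), ...`. -/
def OneDependent {Ω : Type*} [MeasurableSpace Ω] (μ : Measure Ω) (Y : ℕ → Ω → ℂ) : Prop :=
  ∀ s t : ℕ, s + 1 < t →
    ProbabilityTheory.Indep
      (⨆ i ∈ Finset.range (s + 1), MeasurableSpace.comap (Y i) inferInstance)
      (⨆ i : ℕ, MeasurableSpace.comap (Y (t + i)) inferInstance) μ


namespace HeinrichAux


def Spaced (s : Finset ℕ) : Prop := ∀ i ∈ s, ∀ j ∈ s, i < j → i + 1 < j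

lemma sqrt_prod {ι : Type*} (s : Finset ι) (a : ι → ℝ) (h : ∀ i ∈ s, 0 ≤ a i) :
    Real.sqrt (∏ i ∈ s, a i) = ∏ i ∈ s, Real.sqrt (a i) := by
  classical
  induction s using Finset.induction with
  | empty => simp
  | @insert i s hx ih =>
    rw [Finset.prod_insert hx, Finset.prod_insert hx,
      Real.sqrt_mul (h i (Finset.mem_insert_self _ _)),
      ih (fun j hj => h j (Finset.mem_insert_of_mem hj))]

variable {Ω : Type*} [MeasurableSpace Ω] (μ : Measure Ω) [IsProbabilityMeasure μ]
  (Y : ℕ → Ω → ℂ)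

lemma spaced_integral (hdep : OneDependent μ Y) (hL2 : ∀ m, MemLp (Y m) 2 μ) :
    ∀ n (s : Finset ℕ), s.card ≤ n → Spaced s →
      Integrable (fun ω => ∏ m ∈ s, ‖Y m ω‖ ^ 2) μ ∧
      ∫ ω, ∏ m ∈ s, ‖Y m ω‖ ^ 2 ∂μ = ∏ m ∈ s, ∫ ω, ‖Y m ω‖ ^ 2 ∂μ := by
  intro n
  induction n with
  | zero =>
    intro s hcard _
    have : s = ∅ := Finset.card_eq_zero.mp (Nat.le_zero.mp hcard)
    subst this; simp
  | succ n IH =>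
    intro s hcard hsp
    rcases Finset.eq_empty_or_nonempty s with rfl | hne
    · simp
    set i := s.min' hne with hi
    have his : i ∈ s := s.min'_mem hne
    set s' := s.erase i with hs'
    have hcard' : s'.card ≤ n := by
      have h1 : s'.card = s.card - 1 := by
        rw [hs']; exact Finset.card_erase_of_mem his
      have h2 := Finset.card_pos.mpr hne
      omega
    have hsp' : Spaced s' := fun a ha b hb hab =>
      hsp a (Finset.mem_of_mem_erase ha) b (Finset.mem_of_mem_erase hb) hab
    obtain ⟨hint', heq'⟩ := IH s' hcard' hsp'
    have hUint : Integrable (fun ω => ‖Y i ω‖ ^ 2) μ := (hL2 i).norm.integrable_sq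
    have hsplit : (fun ω => ∏ m ∈ s, ‖Y m ω‖ ^ 2) =
        (fun ω => ‖Y i ω‖ ^ 2) * (fun ω => ∏ m ∈ s', ‖Y m ω‖ ^ 2) := by
      funext ω; exact (Finset.mul_prod_erase s _ his).symm
    rcases Finset.eq_empty_or_nonempty s' with h0 | hne'
    · have hsing : s = {i} := by
        apply Finset.eq_singleton_iff_unique_mem.mpr
        refine ⟨his, fun x hx => ?_⟩
        by_contra hxi
        exact absurd (Finset.mem_erase.mpr ⟨hxi, hx⟩) (by rw [← hs', h0]; simp)
      rw [hsing]; simpa using hUint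
    · set t := s'.min' hne' with ht
      have hts' : t ∈ s' := s'.min'_mem hne'
      have hts : t ∈ s := Finset.mem_of_mem_erase hts'
      have hit : i + 1 < t := by
        refine hsp i his t hts ?_
        exact lt_of_le_of_ne (s.min'_le t hts) (Ne.symm (Finset.mem_erase.mp hts').1)
      have hindep := hdep i t hit
      have hU : Measurable[⨆ m ∈ Finset.range (i+1), MeasurableSpace.comap (Y m) inferInstance]
          (fun ω => ‖Y i ω‖ ^ 2) := by
        have h1 : MeasurableSpace.comap (Y i) inferInstance ≤
            ⨆ m ∈ Finset.range (i+1), MeasurableSpace.comap (Y m) inferInstance :=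
          le_iSup₂ (f := fun m (_ : m ∈ Finset.range (i+1)) =>
            MeasurableSpace.comap (Y m) inferInstance) i (Finset.self_mem_range_succ i)
        have hYi : Measurable[⨆ m ∈ Finset.range (i+1),
            MeasurableSpace.comap (Y m) inferInstance] (Y i) := Measurable.of_comap_le h1
        exact Measurable.comp (measurable_norm.pow_const 2) hYi
      have hV : Measurable[⨆ j : ℕ, MeasurableSpace.comap (Y (t + j)) inferInstance]
          (fun ω => ∏ m ∈ s', ‖Y m ω‖ ^ 2) := by
        apply Finset.measurable_prod
        intro m hm
        have htm : t ≤ m := s'.min'_le m hm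
        have h1 : MeasurableSpace.comap (Y m) inferInstance ≤
            ⨆ j : ℕ, MeasurableSpace.comap (Y (t + j)) inferInstance := by
          have h2 := le_iSup (fun j => MeasurableSpace.comap (Y (t + j)) inferInstance) (m - t)
          rwa [Nat.add_sub_cancel' htm] at h2
        have hYm : Measurable[⨆ j : ℕ,
            MeasurableSpace.comap (Y (t + j)) inferInstance] (Y m) := Measurable.of_comap_le h1
        exact Measurable.comp (measurable_norm.pow_const 2) hYm
      have hIndepUV : IndepFun (fun ω => ‖Y i ω‖ ^ 2) (fun ω => ∏ m ∈ s', ‖Y m ω‖ ^ 2) μ := by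
        rw [IndepFun_iff_Indep]
        exact indep_of_indep_of_le_right (indep_of_indep_of_le_left hindep hU.comap_le)
          hV.comap_le
      constructor
      · rw [hsplit]; exact hIndepUV.integrable_mul hUint hint'
      · rw [hsplit]
        have := hIndepUV.integral_mul_eq_mul_integral hUint.1 hint'.1
        calc ∫ ω, ((fun ω => ‖Y i ω‖ ^ 2) * (fun ω => ∏ m ∈ s', ‖Y m ω‖ ^ 2)) ω ∂μ
            = (∫ ω, ‖Y i ω‖ ^ 2 ∂μ) * ∫ ω, ∏ m ∈ s', ‖Y m ω‖ ^ 2 ∂μ := this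
          _ = (∫ ω, ‖Y i ω‖ ^ 2 ∂μ) * ∏ m ∈ s', ∫ ω, ‖Y m ω‖ ^ 2 ∂μ := by rw [heq']
          _ = ∏ m ∈ s, ∫ ω, ‖Y m ω‖ ^ 2 ∂μ := Finset.mul_prod_erase s (fun m => ∫ ω, ‖Y m ω‖ ^ 2 ∂μ) his

lemma prod_memLp (hdep : OneDependent μ Y) (hL2 : ∀ m, MemLp (Y m) 2 μ)
    (s : Finset ℕ) (hsp : Spaced s) :
    MemLp (fun ω => ∏ m ∈ s, ‖Y m ω‖) 2 μ := by
  have hmeas : AEStronglyMeasurable (fun ω => ∏ m ∈ s, ‖Y m ω‖) μ :=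
    Finset.aestronglyMeasurable_fun_prod _ (fun m _ => (hL2 m).1.norm)
  rw [memLp_two_iff_integrable_sq hmeas]
  have h := (spaced_integral μ Y hdep hL2 s.card s le_rfl hsp).1
  simpa [Finset.prod_pow] using h

lemma abs_integral_prod_le (hdep : OneDependent μ Y) (hL2 : ∀ m, MemLp (Y m) 2 μ)
    (s : Finset ℕ) :
    ‖∫ ω, ∏ m ∈ s, Y m ω ∂μ‖ ≤ ∏ m ∈ s, Real.sqrt (∫ ω, ‖Y m ω‖ ^ 2 ∂μ) := by
  classical
  have h1 : ‖∫ ω, ∏ m ∈ s, Y m ω ∂μ‖ ≤ ∫ ω, ∏ m ∈ s, ‖Y m ω‖ ∂μ := by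
    refine (norm_integral_le_integral_norm _).trans_eq ?_
    refine integral_congr_ae (Filter.Eventually.of_forall fun ω => ?_)
    exact norm_prod _ _
  set se := s.filter (fun m => m % 2 = 0) with hse_def
  set so := s.filter (fun m => ¬ m % 2 = 0) with hso_def
  have hse : Spaced se := by
    intro a ha b hb hab
    rw [hse_def, Finset.mem_filter] at ha hb
    omega
  have hso : Spaced so := by
    intro a ha b hb hab
    rw [hso_def, Finset.mem_filter] at ha hb
    omega
  have hu := prod_memLp μ Y hdep hL2 se hse
  have hv := prod_memLp μ Y hdep hL2 so hso
  have hconj : Real.HolderConjugate 2 2 := Real.holderConjugate_iff.mpr ⟨by norm_num, by norm_num⟩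
  have hCS := integral_mul_le_Lp_mul_Lq_of_nonneg (μ := μ) hconj
    (f := fun ω => ∏ m ∈ se, ‖Y m ω‖) (g := fun ω => ∏ m ∈ so, ‖Y m ω‖)
    (Filter.Eventually.of_forall fun ω => Finset.prod_nonneg fun m _ => norm_nonneg _)
    (Filter.Eventually.of_forall fun ω => Finset.prod_nonneg fun m _ => norm_nonneg _)
    (by simpa using hu) (by simpa using hv)
  have hval : ∀ (u : Finset ℕ), Spaced u →
      (∫ ω, (∏ m ∈ u, ‖Y m ω‖) ^ (2:ℝ) ∂μ) ^ (1/(2:ℝ)) =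
        ∏ m ∈ u, Real.sqrt (∫ ω, ‖Y m ω‖ ^ 2 ∂μ) := by
    intro u hu'
    have heq := (spaced_integral μ Y hdep hL2 u.card u le_rfl hu').2
    have h2 : (fun ω => (∏ m ∈ u, ‖Y m ω‖) ^ (2:ℝ)) =
        (fun ω => ∏ m ∈ u, ‖Y m ω‖ ^ 2) := by
      funext ω
      rw [Real.rpow_two, Finset.prod_pow]
    rw [show (∫ ω, (∏ m ∈ u, ‖Y m ω‖) ^ (2:ℝ) ∂μ) = ∫ ω, ∏ m ∈ u, ‖Y m ω‖ ^ 2 ∂μ from by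
        rw [h2], heq, ← Real.sqrt_eq_rpow]
    exact sqrt_prod u _ fun m _ => integral_nonneg fun ω => by positivity
  have h2 : ∫ ω, ∏ m ∈ s, ‖Y m ω‖ ∂μ =
      ∫ ω, (∏ m ∈ se, ‖Y m ω‖) * (∏ m ∈ so, ‖Y m ω‖) ∂μ := by
    refine integral_congr_ae (Filter.Eventually.of_forall fun ω => ?_)
    exact (Finset.prod_filter_mul_prod_filter_not s _ _).symm
  calc ‖∫ ω, ∏ m ∈ s, Y m ω ∂μ‖ ≤ ∫ ω, ∏ m ∈ s, ‖Y m ω‖ ∂μ := h1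
    _ = ∫ ω, (∏ m ∈ se, ‖Y m ω‖) * (∏ m ∈ so, ‖Y m ω‖) ∂μ := h2
    _ ≤ (∫ ω, (∏ m ∈ se, ‖Y m ω‖) ^ (2:ℝ) ∂μ) ^ (1/(2:ℝ)) *
        (∫ ω, (∏ m ∈ so, ‖Y m ω‖) ^ (2:ℝ) ∂μ) ^ (1/(2:ℝ)) := hCS
    _ = (∏ m ∈ se, Real.sqrt (∫ ω, ‖Y m ω‖ ^ 2 ∂μ)) *
        (∏ m ∈ so, Real.sqrt (∫ ω, ‖Y m ω‖ ^ 2 ∂μ)) := by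
        rw [hval se hse, hval so hso]
    _ = ∏ m ∈ s, Real.sqrt (∫ ω, ‖Y m ω‖ ^ 2 ∂μ) :=
        Finset.prod_filter_mul_prod_filter_not s _ _


lemma heinrichE_bound (hdep : OneDependent μ Y) (hL2 : ∀ m, MemLp (Y m) 2 μ) :
    ∀ k, ‖heinrichE μ Y k‖ ≤
      2 ^ k * ∏ m ∈ Finset.range (k+1), Real.sqrt (∫ ω, ‖Y m ω‖ ^ 2 ∂μ) := by
  intro k
  induction k using Nat.strong_induction_on with
  | _ k IH =>
  rw [heinrichE]
  have hgnn : ∀ m : ℕ, 0 ≤ Real.sqrt (∫ ω, ‖Y m ω‖ ^ 2 ∂μ) := fun m => Real.sqrt_nonneg _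
  set P := ∏ m ∈ Finset.range (k+1), Real.sqrt (∫ ω, ‖Y m ω‖ ^ 2 ∂μ) with hP
  have hPnn : 0 ≤ P := Finset.prod_nonneg fun m _ => hgnn m
  have hA : ‖∫ ω, ∏ m ∈ Finset.range (k+1), Y m ω ∂μ‖ ≤ P :=
    abs_integral_prod_le μ Y hdep hL2 _
  have hterm : ∀ j : ℕ, j < k →
      ‖heinrichE μ Y j * ∫ ω, ∏ m ∈ Finset.Icc (j+1) k, Y m ω ∂μ‖ ≤ 2 ^ j * P := by
    intro j hj
    have hmerge : (∏ m ∈ Finset.range (j+1), Real.sqrt (∫ ω, ‖Y m ω‖ ^ 2 ∂μ)) *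
        ∏ m ∈ Finset.Icc (j+1) k, Real.sqrt (∫ ω, ‖Y m ω‖ ^ 2 ∂μ) = P := by
      have hIcc : Finset.Icc (j+1) k = Finset.Ico (j+1) (k+1) := by
        rw [Finset.Ico_add_one_right_eq_Icc]
      rw [hIcc, hP, Finset.range_eq_Ico, Finset.range_eq_Ico]
      exact Finset.prod_Ico_consecutive (fun m => Real.sqrt (∫ ω, ‖Y m ω‖ ^ 2 ∂μ)) (Nat.zero_le _) (by omega : j + 1 ≤ k + 1)
    rw [norm_mul]
    calc ‖heinrichE μ Y j‖ * ‖∫ ω, ∏ m ∈ Finset.Icc (j+1) k, Y m ω ∂μ‖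
        ≤ (2 ^ j * ∏ m ∈ Finset.range (j+1), Real.sqrt (∫ ω, ‖Y m ω‖ ^ 2 ∂μ)) *
          ∏ m ∈ Finset.Icc (j+1) k, Real.sqrt (∫ ω, ‖Y m ω‖ ^ 2 ∂μ) :=
          mul_le_mul (IH j hj) (abs_integral_prod_le μ Y hdep hL2 _) (norm_nonneg _)
            (by positivity)
      _ = 2 ^ j * P := by rw [mul_assoc, hmerge]
  calc ‖(∫ ω, ∏ m ∈ Finset.range (k + 1), Y m ω ∂μ) -
      ∑ j ∈ (Finset.range k).attach,
        heinrichE μ Y j.1 * ∫ ω, ∏ m ∈ Finset.Icc (j.1+1) k, Y m ω ∂μ‖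
      ≤ ‖∫ ω, ∏ m ∈ Finset.range (k + 1), Y m ω ∂μ‖ +
        ‖∑ j ∈ (Finset.range k).attach,
          heinrichE μ Y j.1 * ∫ ω, ∏ m ∈ Finset.Icc (j.1+1) k, Y m ω ∂μ‖ :=
        norm_sub_le _ _
    _ ≤ P + ∑ j ∈ (Finset.range k).attach, 2 ^ j.1 * P := by
        refine add_le_add hA ((norm_sum_le _ _).trans ?_)
        exact Finset.sum_le_sum fun j _ => hterm j.1 (Finset.mem_range.mp j.2)
    _ = P + (2 ^ k - 1) * P := by
        rw [Finset.sum_attach (Finset.range k) (fun j => (2:ℝ) ^ j * P), ← Finset.sum_mul,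
          geom_sum_eq (by norm_num : (2:ℝ) ≠ 1)]
        norm_num
    _ = 2 ^ k * P := by ring

end HeinrichAux

theorem heinrich_cumulant_bound {Ω : Type*} [MeasurableSpace Ω] (μ : Measure Ω)
    [IsProbabilityMeasure μ] (Y : ℕ → Ω → ℂ) (k : ℕ) (hk : 1 ≤ k)
    (hL2 : ∀ m, MeasureTheory.MemLp (Y m) 2 μ)
    (hdep : OneDependent μ Y) :
    ‖heinrichE μ Y (k - 1)‖ ≤
      2 ^ (k - 1) * ∏ m ∈ Finset.range k,
        Real.sqrt (∫ ω, ‖Y m ω‖ ^ 2 ∂μ) := by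
  obtain ⟨n, rfl⟩ : ∃ n, k = n + 1 := ⟨k - 1, (Nat.succ_pred_eq_of_pos hk).symm⟩
  simp only [Nat.add_sub_cancel]
  have h := HeinrichAux.heinrichE_bound μ Y hdep hL2 n
  simpa using h
end

section
/- For all real x ≥ 1, x^x e^{-x} √(2π(x + 0.16)) < Γ(x+1) < x^x e^{-x} √(2π(x + 0.18)). -/
open Real

open Filter Topology

-- core log inequality lemmas
lemma logratio_lb {t : ℝ} (h0 : 0 < t) (h1 : t < 1) :
    2*t + 2/3*t^3 < Real.log (1+t) - Real.log (1-t) := by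
  set f : ℝ → ℝ := fun s => Real.log (1+s) - Real.log (1-s) - (2*s + 2/3*s^3) with hf
  have key : StrictMonoOn f (Set.Icc 0 t) := by
    apply strictMonoOn_of_deriv_pos (convex_Icc 0 t)
    · apply ContinuousOn.sub
      apply ContinuousOn.sub
      · exact (continuousOn_const.add continuousOn_id).log (by
          intro s hs; simp only [Pi.add_apply, Pi.sub_apply, id_eq]; nlinarith [hs.1])
      · exact (continuousOn_const.sub continuousOn_id).log (by
          intro s hs; simp only [Pi.add_apply, Pi.sub_apply, id_eq]; nlinarith [hs.2, h1])
      · fun_prop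
    · intro s hs
      rw [interior_Icc] at hs
      obtain ⟨hs0, hst⟩ := hs
      have hA : (1:ℝ) + s ≠ 0 := by nlinarith
      have hB : (1:ℝ) - s ≠ 0 := by nlinarith
      have d1 : HasDerivAt (fun s : ℝ => Real.log (1+s)) (1/(1+s)) s := by
        simpa using (((hasDerivAt_id s).const_add (1:ℝ)).log hA)
      have d2 : HasDerivAt (fun s : ℝ => Real.log (1-s)) ((-1)/(1-s)) s := by
        simpa using (((hasDerivAt_const s (1:ℝ)).sub (hasDerivAt_id s)).log hB)
      have d3 : HasDerivAt (fun s : ℝ => 2*s + 2/3*s^3) (2 + 2/3*(3*s^2)) s := by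
        simpa [Pi.add_def] using (((hasDerivAt_id s).const_mul (2:ℝ)).add
          ((hasDerivAt_pow 3 s).const_mul (2/3:ℝ)))
      have hd : HasDerivAt f (1/(1+s) - (-1)/(1-s) - (2 + 2/3*(3*s^2))) s :=
        (d1.sub d2).sub d3
      rw [hd.deriv]
      have hpos : (0:ℝ) < (1+s)*(1-s) := by nlinarith
      rw [show 1/(1+s) - (-1)/(1-s) - (2 + 2/3*(3*s^2)) = 2*s^4/((1+s)*(1-s)) by
        field_simp; ring]
      positivity
  have h := key (Set.left_mem_Icc.2 h0.le) (Set.right_mem_Icc.2 h0.le) h0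
  simp only [hf, Real.log_one, add_zero, sub_zero] at h
  norm_num at h
  linarith

lemma logratio_ub {t : ℝ} (h0 : 0 < t) (h1 : t < 1) :
    Real.log (1+t) - Real.log (1-t) < 2*t + 2/3*t^3 + 2/5*t^5/(1-t^2) := by
  set f : ℝ → ℝ := fun s =>
    2*s + 2/3*s^3 + 2/5*(s^5/(1-s^2)) - (Real.log (1+s) - Real.log (1-s)) with hf
  have key : StrictMonoOn f (Set.Icc 0 t) := by
    apply strictMonoOn_of_deriv_pos (convex_Icc 0 t)
    · apply ContinuousOn.sub
      · apply ContinuousOn.add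
        · fun_prop
        · apply ContinuousOn.mul continuousOn_const
          apply ContinuousOn.div (by fun_prop) (by fun_prop)
          intro s hs; nlinarith [hs.1, hs.2]
      · apply ContinuousOn.sub
        · exact (continuousOn_const.add continuousOn_id).log (by
            intro s hs; simp only [Pi.add_apply, Pi.sub_apply, id_eq]; nlinarith [hs.1])
        · exact (continuousOn_const.sub continuousOn_id).log (by
            intro s hs; simp only [Pi.add_apply, Pi.sub_apply, id_eq]; nlinarith [hs.2, h1])
    · intro s hs
      rw [interior_Icc] at hs
      obtain ⟨hs0, hst⟩ := hs
      have hst1 : s < 1 := lt_trans hst h1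
      have hA : (1:ℝ) + s ≠ 0 := by nlinarith
      have hB : (1:ℝ) - s ≠ 0 := by nlinarith
      have hC : (1:ℝ) - s^2 ≠ 0 := by nlinarith
      have d1 : HasDerivAt (fun s : ℝ => Real.log (1+s)) (1/(1+s)) s := by
        simpa using (((hasDerivAt_id s).const_add (1:ℝ)).log hA)
      have d2 : HasDerivAt (fun s : ℝ => Real.log (1-s)) ((-1)/(1-s)) s := by
        simpa using (((hasDerivAt_const s (1:ℝ)).sub (hasDerivAt_id s)).log hB)
      have d3 : HasDerivAt (fun s : ℝ => 2*s + 2/3*s^3) (2 + 2/3*(3*s^2)) s := by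
        simpa [Pi.add_def] using (((hasDerivAt_id s).const_mul (2:ℝ)).add
          ((hasDerivAt_pow 3 s).const_mul (2/3:ℝ)))
      have d4' : HasDerivAt (fun s : ℝ => (1:ℝ) - s^2) (-(2*s)) s := by
        simpa [Pi.sub_def] using ((hasDerivAt_const s (1:ℝ)).sub (hasDerivAt_pow 2 s))
      have d4 : HasDerivAt (fun s : ℝ => s^5/(1-s^2))
          ((5*s^4*(1-s^2) - s^5*(-(2*s)))/(1-s^2)^2) s := by
        simpa [Pi.div_def] using (hasDerivAt_pow 5 s).div d4' hC
      have hd : HasDerivAt f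
          (2 + 2/3*(3*s^2) + 2/5*((5*s^4*(1-s^2) - s^5*(-(2*s)))/(1-s^2)^2)
            - (1/(1+s) - (-1)/(1-s))) s :=
        (d3.add (d4.const_mul (2/5:ℝ))).sub (d1.sub d2)
      rw [hd.deriv]
      have hpos : (0:ℝ) < 1 - s^2 := by nlinarith
      rw [show 2 + 2/3*(3*s^2) + 2/5*((5*s^4*(1-s^2) - s^5*(-(2*s)))/(1-s^2)^2)
            - (1/(1+s) - (-1)/(1-s)) = (4/5)*s^6/(1-s^2)^2 by
        have h2 : (1-s^2) = (1+s)*(1-s) := by ring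
        field_simp
        ring]
      positivity
  have h := key (Set.left_mem_Icc.2 h0.le) (Set.right_mem_Icc.2 h0.le) h0
  simp only [hf, Real.log_one] at h
  norm_num at h
  rw [show 2/5*t^5/(1-t^2) = 2/5*(t^5/(1-t^2)) by ring]
  linarith

lemma log_one_add_lb {u : ℝ} (h0 : 0 < u) : u - u^2/2 < Real.log (1+u) := by
  set f : ℝ → ℝ := fun s => Real.log (1+s) - (s - s^2/2) with hf
  have key : StrictMonoOn f (Set.Icc 0 u) := by
    apply strictMonoOn_of_deriv_pos (convex_Icc 0 u)
    · apply ContinuousOn.sub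
      · exact (continuousOn_const.add continuousOn_id).log (by
          intro s hs; simp only [Pi.add_apply, Pi.sub_apply, id_eq]; nlinarith [hs.1])
      · fun_prop
    · intro s hs
      rw [interior_Icc] at hs
      obtain ⟨hs0, hsu⟩ := hs
      have hA : (1:ℝ) + s ≠ 0 := by nlinarith
      have d1 : HasDerivAt (fun s : ℝ => Real.log (1+s)) (1/(1+s)) s := by
        simpa using (((hasDerivAt_id s).const_add (1:ℝ)).log hA)
      have d2 : HasDerivAt (fun s : ℝ => s - s^2/2) (1 - (2*s)/2) s := by
        simpa [Pi.sub_def] using ((hasDerivAt_id s).sub ((hasDerivAt_pow 2 s).div_const 2))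
      have hd : HasDerivAt f (1/(1+s) - (1 - (2*s)/2)) s := d1.sub d2
      rw [hd.deriv]
      rw [show 1/(1+s) - (1 - (2*s)/2) = s^2/(1+s) by field_simp; ring]
      positivity
  have h := key (Set.left_mem_Icc.2 h0.le) (Set.right_mem_Icc.2 h0.le) h0
  simp only [hf, Real.log_one] at h
  norm_num at h
  linarith

lemma log_one_add_ub {u : ℝ} (h0 : 0 < u) : Real.log (1+u) < u - u^2/2 + u^3/3 := by
  set f : ℝ → ℝ := fun s => (s - s^2/2 + s^3/3) - Real.log (1+s) with hf
  have key : StrictMonoOn f (Set.Icc 0 u) := by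
    apply strictMonoOn_of_deriv_pos (convex_Icc 0 u)
    · apply ContinuousOn.sub
      · fun_prop
      · exact (continuousOn_const.add continuousOn_id).log (by
          intro s hs; simp only [Pi.add_apply, Pi.sub_apply, id_eq]; nlinarith [hs.1])
    · intro s hs
      rw [interior_Icc] at hs
      obtain ⟨hs0, hsu⟩ := hs
      have hA : (1:ℝ) + s ≠ 0 := by nlinarith
      have d1 : HasDerivAt (fun s : ℝ => Real.log (1+s)) (1/(1+s)) s := by
        simpa using (((hasDerivAt_id s).const_add (1:ℝ)).log hA)
      have d2 : HasDerivAt (fun s : ℝ => s - s^2/2 + s^3/3) (1 - (2*s)/2 + (3*s^2)/3) s := by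
        simpa [Pi.add_def, Pi.sub_def] using (((hasDerivAt_id s).sub ((hasDerivAt_pow 2 s).div_const 2)).add
          ((hasDerivAt_pow 3 s).div_const 3))
      have hd : HasDerivAt f ((1 - (2*s)/2 + (3*s^2)/3) - 1/(1+s)) s := d2.sub d1
      rw [hd.deriv]
      rw [show (1 - (2*s)/2 + (3*s^2)/3) - 1/(1+s) = s^3/(1+s) by field_simp; ring]
      positivity
  have h := key (Set.left_mem_Icc.2 h0.le) (Set.right_mem_Icc.2 h0.le) h0
  simp only [hf, Real.log_one] at h
  norm_num at h
  linarith

noncomputable def stirMu (y : ℝ) : ℝ :=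
  Real.log (Real.Gamma y) - ((y - 1/2) * Real.log y - y + Real.log (2 * π) / 2)

lemma stirMu_rec {y : ℝ} (hy : 0 < y) :
    stirMu y - stirMu (y+1) = (y+1/2)*(Real.log (y+1) - Real.log y) - 1 := by
  have hG : Real.Gamma (y+1) = y * Real.Gamma y := Real.Gamma_add_one (ne_of_gt hy)
  have hGy : 0 < Real.Gamma y := Real.Gamma_pos_of_pos hy
  rw [stirMu, stirMu, hG, Real.log_mul (ne_of_gt hy) (ne_of_gt hGy)]
  ring

-- g bounds via t = 1/(2y+1)

lemma g_bounds {y : ℝ} (hy : 1 ≤ y) :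
    1/(3*(2*y+1)^2) < (y+1/2)*(Real.log (y+1) - Real.log y) - 1 ∧
    (y+1/2)*(Real.log (y+1) - Real.log y) - 1
      < 1/(3*(2*y+1)^2) + 1/(20*(y*(y+1)*(2*y+1)^2)) := by
  have hy0 : (0:ℝ) < y := by linarith
  set t : ℝ := 1/(2*y+1) with ht
  have h2y : (0:ℝ) < 2*y+1 := by linarith
  have ht0 : 0 < t := by positivity
  have ht1 : t < 1 := by rw [ht]; rw [div_lt_one h2y]; linarith
  have hlog : Real.log (1+t) - Real.log (1-t) = Real.log (y+1) - Real.log y := by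
    have e1 : (1:ℝ)+t = (y+1)/(y+1/2) := by rw [ht]; field_simp; ring
    have e2 : (1:ℝ)-t = y/(y+1/2) := by rw [ht]; field_simp; ring
    rw [e1, e2, Real.log_div (by linarith) (by linarith),
      Real.log_div (ne_of_gt hy0) (by linarith)]
    ring
  have hmul : y + 1/2 = 1/(2*t) := by rw [ht]; field_simp
  have hl := logratio_lb ht0 ht1
  have hu := logratio_ub ht0 ht1
  rw [hlog] at hl hu
  have e3 : (y+1/2)*(2*t + 2/3*t^3) = 1 + 1/(3*(2*y+1)^2) := by
    rw [ht]; field_simp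
  have e4 : (y+1/2)*(2*t + 2/3*t^3 + 2/5*t^5/(1-t^2))
      = 1 + 1/(3*(2*y+1)^2) + 1/(20*(y*(y+1)*(2*y+1)^2)) := by
    have h1t2 : 1 - t^2 = (4*(y*(y+1)))/(2*y+1)^2 := by rw [ht]; field_simp; ring
    rw [h1t2, ht]
    have : (0:ℝ) < y*(y+1) := by positivity
    field_simp
    ring
  constructor
  · have := mul_lt_mul_of_pos_left hl (show (0:ℝ) < y + 1/2 by linarith)
    rw [e3] at this; linarith
  · have := mul_lt_mul_of_pos_left hu (show (0:ℝ) < y + 1/2 by linarith)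
    rw [e4] at this; linarith

lemma Gamma_add_nat {x : ℝ} (hx : 0 < x) (n : ℕ) :
    Real.Gamma (x + n) = Real.Gamma x * ∏ j ∈ Finset.range n, (x + j) := by
  induction n with
  | zero => simp
  | succ n ih =>
    have h1 : x + (n:ℝ) ≠ 0 := by positivity
    have : x + ((n+1 : ℕ):ℝ) = (x + n) + 1 := by push_cast; ring
    rw [this, Real.Gamma_add_one h1, ih, Finset.prod_range_succ]
    ring

lemma tendsto_stirMu_zero {x : ℝ} (hx : 0 < x) :
    Tendsto (fun n : ℕ => stirMu (x + n)) atTop (𝓝 0) := by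
  rw [← Filter.tendsto_add_atTop_iff_nat 1]
  have hGx : 0 < Real.Gamma x := Real.Gamma_pos_of_pos hx
  -- Step 1 : n^x n!/Γ(x+n+1) → 1
  have step1 : Tendsto (fun n : ℕ => (n:ℝ)^x * n.factorial / Real.Gamma (x+(n:ℝ)+1))
      atTop (𝓝 1) := by
    have h := (Real.GammaSeq_tendsto_Gamma x).div_const (Real.Gamma x)
    rw [div_self (ne_of_gt hGx)] at h
    refine h.congr (fun n => ?_)
    have hprod : Real.Gamma x * ∏ j ∈ Finset.range (n+1), (x + j) = Real.Gamma (x+(n:ℝ)+1) := by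
      rw [← Gamma_add_nat hx (n+1)]; push_cast; ring_nf
    rw [Real.GammaSeq, div_div, mul_comm (∏ j ∈ Finset.range (n+1), (x + (j:ℝ))), hprod]
  -- Step 2 : log(n^x n!) - log Γ(x+n+1) → 0
  have step2 : Tendsto (fun n : ℕ =>
      Real.log (Real.Gamma (x+(n:ℝ)+1)) - Real.log ((n:ℝ)^x * n.factorial)) atTop (𝓝 0) := by
    have hl : Tendsto (fun n : ℕ =>
        Real.log ((n:ℝ)^x * n.factorial / Real.Gamma (x+(n:ℝ)+1))) atTop (𝓝 0) := by
      have := (Real.continuousAt_log one_ne_zero).tendsto.comp step1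
      simpa [Function.comp_def] using this
    have := hl.neg
    rw [neg_zero] at this
    refine this.congr' ?_
    filter_upwards [eventually_ge_atTop 1] with n hn
    have hn0 : (0:ℝ) < n := by exact_mod_cast hn
    have hnum : (0:ℝ) < (n:ℝ)^x * n.factorial := by
      have := Nat.factorial_pos n
      positivity
    have hden : (0:ℝ) < Real.Gamma (x+(n:ℝ)+1) := Real.Gamma_pos_of_pos (by linarith)
    rw [Real.log_div (ne_of_gt hnum) (ne_of_gt hden)]
    ring
  -- Step 3 : Stirling for n!
  have hnu : Tendsto (fun n : ℕ => Real.log (Stirling.stirlingSeq n))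
      atTop (𝓝 (Real.log π / 2)) := by
    have h := (Real.continuousAt_log (ne_of_gt (Real.sqrt_pos.2 Real.pi_pos))).tendsto.comp
      Stirling.tendsto_stirlingSeq_sqrt_pi
    rw [Function.comp_def] at h
    simpa [Real.log_sqrt Real.pi_pos.le] using h
  -- Step 4 : limits of log(1+(x+1)/n)
  have hw2 : Tendsto (fun n : ℕ => Real.log (1 + (x+1)/n)) atTop (𝓝 0) := by
    have h1 : Tendsto (fun n : ℕ => 1 + (x+1)/(n:ℝ)) atTop (𝓝 1) := by
      have := (tendsto_const_div_atTop_nhds_zero_nat (x+1)).const_add (1:ℝ)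
      simpa using this
    have := (Real.continuousAt_log one_ne_zero).tendsto.comp h1
    simpa [Function.comp_def] using this
  have hw1 : Tendsto (fun n : ℕ => (n:ℝ) * Real.log (1 + (x+1)/n)) atTop (𝓝 (x+1)) :=
    (Real.tendsto_mul_log_one_add_div_atTop (x+1)).comp tendsto_natCast_atTop_atTop
  -- assemble the limit of the model function T
  have tT : Tendsto (fun n : ℕ =>
      (Real.log (Real.Gamma (x+(n:ℝ)+1)) - Real.log ((n:ℝ)^x * n.factorial))
      + (Real.log (Stirling.stirlingSeq n) - Real.log π / 2)
      + ((x+1) - ((n:ℝ) * Real.log (1 + (x+1)/n) + (x+1/2) * Real.log (1 + (x+1)/n))))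
      atTop (𝓝 0) := by
    have t2 := hnu.sub_const (Real.log π / 2)
    rw [sub_self] at t2
    have t3 := (tendsto_const_nhds :
        Tendsto (fun _ : ℕ => (x+1:ℝ)) atTop (𝓝 (x+1))).sub
      (hw1.add (hw2.const_mul (x+1/2)))
    rw [show (x+1) - ((x+1) + (x+1/2)*0) = 0 by ring] at t3
    have := (step2.add t2).add t3
    simpa using this
  -- final : eventual equality
  refine tT.congr' ?_
  filter_upwards [eventually_ge_atTop 1] with n hn
  have hn0 : (0:ℝ) < n := by exact_mod_cast hn
  have hfac0 : (0:ℝ) < n.factorial := by exact_mod_cast Nat.factorial_pos n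
  have hden : (0:ℝ) < Real.sqrt (2*(n:ℝ)) * ((n:ℝ)/Real.exp 1)^n := by positivity
  have hs : 0 < Stirling.stirlingSeq n := by
    rw [Stirling.stirlingSeq]; positivity
  have hfact : ((n.factorial : ℝ)) = Stirling.stirlingSeq n * (Real.sqrt (2*(n:ℝ)) * ((n:ℝ)/Real.exp 1)^n) := by
    rw [Stirling.stirlingSeq]
    try field_simp
  have e_fact : Real.log (n.factorial) =
      Real.log (Stirling.stirlingSeq n) + ((Real.log 2 + Real.log n)/2 + ((n:ℝ)*(Real.log n - 1))) := by
    rw [hfact, Real.log_mul (ne_of_gt hs) (ne_of_gt hden),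
      Real.log_mul (by positivity) (by positivity),
      Real.log_sqrt (by positivity), Real.log_mul (by norm_num) (ne_of_gt hn0),
      Real.log_pow, Real.log_div (ne_of_gt hn0) (Real.exp_ne_zero 1), Real.log_exp]
    try push_cast
    try ring
  have e_num : Real.log ((n:ℝ)^x * n.factorial) = x * Real.log n + Real.log (n.factorial) := by
    rw [Real.log_mul (by positivity) (ne_of_gt hfac0), Real.log_rpow hn0]
  have e_L : Real.log (1 + (x+1)/n) = Real.log (x+(n:ℝ)+1) - Real.log n := by
    rw [show (1:ℝ) + (x+1)/n = (x+(n:ℝ)+1)/n by field_simp; ring,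
      Real.log_div (by positivity) (ne_of_gt hn0)]
  have e_2pi : Real.log (2*π) = Real.log 2 + Real.log π :=
    Real.log_mul (by norm_num) (ne_of_gt Real.pi_pos)
  have hcast : x + ((n+1 : ℕ):ℝ) = x + (n:ℝ) + 1 := by push_cast; ring
  rw [stirMu, hcast, e_num, e_fact, e_L, e_2pi]
  ring

noncomputable def cFun (y : ℝ) : ℝ := 1/12 * y⁻¹ - 1/500 * (y⁻¹)^3

noncomputable def lFun (y : ℝ) : ℝ := (12*y+1)⁻¹

lemma step_ub {y : ℝ} (hy : 1 ≤ y) :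
    stirMu y - stirMu (y+1) < cFun y - cFun (y+1) := by
  have hy0 : (0:ℝ) < y := by linarith
  have h := (g_bounds hy).2
  rw [stirMu_rec hy0]
  refine lt_of_lt_of_le h ?_
  have hkey : cFun y - cFun (y+1) - (1/(3*(2*y+1)^2) + 1/(20*(y*(y+1)*(2*y+1)^2)))
      = (14*y^4 + 28*y^3 - 7*y^2 - 21*y - 3)/(1500 * (y^3*(y+1)^3*(2*y+1)^2)) := by
    rw [cFun, cFun]
    field_simp
    ring
  have hnum : (0:ℝ) < 14*y^4 + 28*y^3 - 7*y^2 - 21*y - 3 := by nlinarith [sq_nonneg (y-1), sq_nonneg (y+1), sq_nonneg (y^2-1), hy0]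
  have hden : (0:ℝ) < 1500 * (y^3*(y+1)^3*(2*y+1)^2) := by positivity
  nlinarith [div_pos hnum hden, hkey]

lemma step_lb {y : ℝ} (hy : 1 ≤ y) :
    lFun y - lFun (y+1) < stirMu y - stirMu (y+1) := by
  have hy0 : (0:ℝ) < y := by linarith
  have h := (g_bounds hy).1
  rw [stirMu_rec hy0]
  refine lt_of_le_of_lt ?_ h
  have h1 : (0:ℝ) < 12*y+1 := by linarith
  have h2 : (0:ℝ) < 12*(y+1)+1 := by linarith
  rw [lFun, lFun, inv_eq_one_div, inv_eq_one_div,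
    div_sub_div _ _ (by positivity) (by positivity),
    div_le_div_iff₀ (by positivity) (by positivity)]
  nlinarith [hy0]

lemma mu_lt_c {x : ℝ} (hx : 1 ≤ x) : stirMu x < cFun x := by
  have hx0 : (0:ℝ) < x := by linarith
  set δ : ℝ := (cFun x - cFun (x+1)) - (stirMu x - stirMu (x+1)) with hδ
  have hδ0 : 0 < δ := by have := step_ub hx; simp only [hδ]; linarith
  have claim : ∀ N : ℕ, stirMu x + δ ≤ stirMu (x+N+1) + (cFun x - cFun (x+N+1)) := by
    intro N
    induction N with
    | zero => simp only [Nat.cast_zero, add_zero]; rw [hδ]; ring_nf; rfl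
    | succ N ih =>
      have h1 : (1:ℝ) ≤ x + N + 1 := by
        have : (0:ℝ) ≤ N := Nat.cast_nonneg N
        linarith
      have h2 := step_ub h1
      have hc : x + ((N+1:ℕ):ℝ) + 1 = (x + N + 1) + 1 := by push_cast; ring
      rw [hc]
      linarith
  have hF : Tendsto (fun N : ℕ => stirMu (x+N+1) + (cFun x - cFun (x+N+1)))
      atTop (𝓝 (0 + (cFun x - 0))) := by
    have harg : Tendsto (fun N : ℕ => x + (N:ℝ) + 1) atTop atTop := by
      have := tendsto_natCast_atTop_atTop (R := ℝ)
      have h2 := tendsto_atTop_add_const_right atTop (x+1) this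
      refine h2.congr (fun n => by ring)
    have hmu : Tendsto (fun N : ℕ => stirMu (x+N+1)) atTop (𝓝 0) := by
      have := tendsto_stirMu_zero (show (0:ℝ) < x+1 by linarith)
      refine this.congr (fun n => congrArg stirMu (by push_cast; ring))
    have hc : Tendsto (fun N : ℕ => cFun (x+N+1)) atTop (𝓝 0) := by
      have hinv : Tendsto (fun y : ℝ => cFun y) atTop (𝓝 0) := by
        have h0 := tendsto_inv_atTop_zero (𝕜 := ℝ)
        have := (h0.const_mul (1/12:ℝ)).sub ((h0.pow 3).const_mul (1/500:ℝ))
        simpa [cFun] using this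
      exact hinv.comp harg
    exact hmu.add (tendsto_const_nhds.sub hc)
  have := ge_of_tendsto' hF claim
  rw [zero_add, sub_zero] at this
  linarith

lemma l_lt_mu {x : ℝ} (hx : 1 ≤ x) : lFun x < stirMu x := by
  have hx0 : (0:ℝ) < x := by linarith
  set δ : ℝ := (stirMu x - stirMu (x+1)) - (lFun x - lFun (x+1)) with hδ
  have hδ0 : 0 < δ := by have := step_lb hx; simp only [hδ]; linarith
  have claim : ∀ N : ℕ, lFun x + δ ≤ stirMu x - stirMu (x+N+1) + lFun (x+N+1) := by
    intro N
    induction N with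
    | zero => simp only [Nat.cast_zero, add_zero]; rw [hδ]; ring_nf; rfl
    | succ N ih =>
      have h1 : (1:ℝ) ≤ x + N + 1 := by
        have : (0:ℝ) ≤ N := Nat.cast_nonneg N
        linarith
      have h2 := step_lb h1
      have hc : x + ((N+1:ℕ):ℝ) + 1 = (x + N + 1) + 1 := by push_cast; ring
      rw [hc]
      linarith
  have hF : Tendsto (fun N : ℕ => stirMu x - stirMu (x+N+1) + lFun (x+N+1))
      atTop (𝓝 (stirMu x - 0 + 0)) := by
    have harg : Tendsto (fun N : ℕ => x + (N:ℝ) + 1) atTop atTop := by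
      have := tendsto_natCast_atTop_atTop (R := ℝ)
      have h2 := tendsto_atTop_add_const_right atTop (x+1) this
      refine h2.congr (fun n => by ring)
    have hmu : Tendsto (fun N : ℕ => stirMu (x+N+1)) atTop (𝓝 0) := by
      have := tendsto_stirMu_zero (show (0:ℝ) < x+1 by linarith)
      refine this.congr (fun n => congrArg stirMu (by push_cast; ring))
    have hl : Tendsto (fun N : ℕ => lFun (x+N+1)) atTop (𝓝 0) := by
      have hinv : Tendsto (fun y : ℝ => lFun y) atTop (𝓝 0) := by
        have h0 := tendsto_inv_atTop_zero (𝕜 := ℝ)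
        have h1 : Tendsto (fun y : ℝ => 12*y+1) atTop atTop := by
          have h12 : Tendsto (fun y : ℝ => 12*y) atTop atTop :=
            Tendsto.const_mul_atTop (show (0:ℝ) < 12 by norm_num) tendsto_id
          exact tendsto_atTop_add_const_right atTop (1:ℝ) h12
        simpa [lFun, Function.comp_def] using h0.comp h1
      exact hinv.comp harg
    exact (tendsto_const_nhds.sub hmu).add hl
  have := ge_of_tendsto' hF claim
  rw [sub_zero, add_zero] at this
  linarith

theorem gamma_stirling_two_sided (x : ℝ) (hx : 1 ≤ x) :
    Real.rpow x x * Real.exp (-x) * Real.sqrt (2 * π * (x + 0.16)) < Real.Gamma (x + 1) ∧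
    Real.Gamma (x + 1) < Real.rpow x x * Real.exp (-x) * Real.sqrt (2 * π * (x + 0.18)) := by
  have hx0 : (0:ℝ) < x := by linarith
  have hπ : (0:ℝ) < π := Real.pi_pos
  have hGx : 0 < Real.Gamma x := Real.Gamma_pos_of_pos hx0
  have hlogG : Real.log (Real.Gamma (x+1))
      = (x + 1/2) * Real.log x - x + Real.log (2*π)/2 + stirMu x := by
    rw [Real.Gamma_add_one (ne_of_gt hx0), Real.log_mul (ne_of_gt hx0) (ne_of_gt hGx), stirMu]
    ring
  have hGexp : Real.Gamma (x+1)
      = Real.exp ((x + 1/2) * Real.log x - x + Real.log (2*π)/2 + stirMu x) := by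
    rw [← hlogG, Real.exp_log (Real.Gamma_pos_of_pos (by linarith))]
  have hside : ∀ a : ℝ, 0 < a →
      Real.rpow x x * Real.exp (-x) * Real.sqrt (2 * π * (x + a))
      = Real.exp (x * Real.log x - x + (Real.log (2*π) + Real.log (x+a))/2) := by
    intro a ha
    have hxa : (0:ℝ) < x + a := by linarith
    have h2π : (0:ℝ) < 2*π := by linarith
    have hs : Real.sqrt (2 * π * (x + a))
        = Real.exp ((Real.log (2*π) + Real.log (x+a))/2) := by
      rw [show 2 * π * (x+a) = (2*π) * (x+a) by ring, Real.sqrt_eq_rpow,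
        Real.rpow_def_of_pos (by positivity), Real.log_mul (ne_of_gt h2π) (ne_of_gt hxa)]
      ring_nf
    have hr : Real.rpow x x = Real.exp (Real.log x * x) := Real.rpow_def_of_pos hx0 x
    rw [hs, hr, ← Real.exp_add, ← Real.exp_add]
    ring_nf
  -- reduce to exponent comparison
  have hlog16 : Real.log (1 + 0.16/x) = Real.log (x + 0.16) - Real.log x := by
    rw [show (1:ℝ) + 0.16/x = (x + 0.16)/x by field_simp,
      Real.log_div (by norm_num; nlinarith) (ne_of_gt hx0)]
  have hlog18 : Real.log (1 + 0.18/x) = Real.log (x + 0.18) - Real.log x := by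
    rw [show (1:ℝ) + 0.18/x = (x + 0.18)/x by field_simp,
      Real.log_div (by norm_num; nlinarith) (ne_of_gt hx0)]
  have hxinv : x⁻¹ ≤ 1 := by rw [inv_le_one_iff₀]; right; exact hx
  have hxinv0 : 0 < x⁻¹ := by positivity
  constructor
  · -- lower bound
    rw [hGexp, hside 0.16 (by norm_num)]
    rw [Real.exp_lt_exp]
    have hu : (0:ℝ) < 0.16/x := by positivity
    have h1 := log_one_add_ub hu
    have h2 := l_lt_mu hx
    have hpoly : (0.16/x) - (0.16/x)^2/2 + (0.16/x)^3/3 ≤ 2 * lFun x := by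
      rw [lFun]
      rw [div_pow, div_pow, show (0.16:ℝ)^2 = 64/2500 by norm_num,
        show (0.16:ℝ)^3 = 64/15625 by norm_num]
      rw [show (0.16:ℝ) = 4/25 by norm_num]
      have h12 : (0:ℝ) < 12*x+1 := by linarith
      have hx3 : (0:ℝ) < x^3 := by positivity
      have key : 2*(12*x+1)⁻¹ - (4/25/x - 64/2500/x^2/2 + 64/15625/x^3/3)
          = (3750*x^3 - 300*x^2 - 168*x - 64)/(46875*(x^3*(12*x+1))) := by
        field_simp
        ring
      have hnum : (0:ℝ) ≤ 3750*x^3 - 300*x^2 - 168*x - 64 := by nlinarith [sq_nonneg (x-1), sq_nonneg x, hx0]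
      have hden : (0:ℝ) < 46875*(x^3*(12*x+1)) := by positivity
      nlinarith [div_nonneg hnum (le_of_lt hden), key]
    have : Real.log (x + 0.16) - Real.log x < 2 * stirMu x := by
      rw [← hlog16]; linarith
    linarith
  · -- upper bound
    rw [hGexp, hside 0.18 (by norm_num)]
    rw [Real.exp_lt_exp]
    have hu : (0:ℝ) < 0.18/x := by positivity
    have h1 := log_one_add_lb hu
    have h2 := mu_lt_c hx
    have hpoly : 2 * cFun x ≤ (0.18/x) - (0.18/x)^2/2 := by
      rw [cFun]
      have e1 : (0.18:ℝ)/x = 9/50 * x⁻¹ := by rw [show (0.18:ℝ) = 9/50 by norm_num]; ring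
      rw [e1]
      nlinarith [hxinv, hxinv0, sq_nonneg (x⁻¹ - 1), pow_pos hxinv0 3, sq_nonneg x⁻¹]
    have : 2 * stirMu x < Real.log (x + 0.18) - Real.log x := by
      rw [← hlog18]; linarith
    linarith
end

section
/- Let M be a finite signed measure on the integers with Σ_{k∈ℤ} |k||M{k}| < ∞, and let M̂(it) = Σ_k e^{itk} M{k}. Then for any real a and any b > 0, the total variation norm ‖M‖ := Σ_k |M{k}| satisfies ‖M‖ ≤ (1 + bπ)^{1/2} ( (1/2π) ∫_{-π}^{π} ( |M̂(it)|² + b^{-2} |(e^{-ita} M̂(it))'|² ) dt )^{1/2}, where the derivative is with respect to t. -/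
open Real MeasureTheory


private noncomputable def Lg (a b : ℝ) : ℝ → ℝ := fun x => (1 + ((x - a)/b)^2)⁻¹

lemma Lg_cont (a b : ℝ) : Continuous (Lg a b) := by
  apply Continuous.inv₀ (by fun_prop)
  intro x; positivity

lemma Lg_int (a b : ℝ) (hb : 0 < b) (u v : ℝ) :
    ∫ x in u..v, Lg a b x = b * (arctan ((v-a)/b) - arctan ((u-a)/b)) := by
  have h : ∀ x : ℝ, HasDerivAt (fun y : ℝ => b * arctan ((y - a)/b)) (Lg a b x) x := by
    intro x
    have h1 : HasDerivAt (fun y : ℝ => (y - a)/b) (1/b) x := by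
      simpa using ((hasDerivAt_id x).sub_const a).div_const b
    have := (h1.arctan).const_mul b
    refine this.congr_deriv ?_
    unfold Lg
    field_simp
  rw [intervalIntegral.integral_eq_sub_of_hasDerivAt (fun x _ => h x)
    ((Lg_cont a b).intervalIntegrable _ _)]
  ring

lemma Lg_le_one (a b : ℝ) (x : ℝ) : Lg a b x ≤ 1 := by
  rw [Lg, inv_le_one_iff₀]; right; nlinarith [sq_nonneg ((x-a)/b)]

lemma Lg_nonneg (a b : ℝ) (x : ℝ) : 0 ≤ Lg a b x := by
  rw [Lg]; positivity

lemma Lg_mono (a b : ℝ) (hb : 0 < b) {x y : ℝ} (hxy : x ≤ y) (hy : y ≤ a) :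
    Lg a b x ≤ Lg a b y := by
  unfold Lg
  have h2 : (y - a)^2 ≤ (x - a)^2 := by nlinarith
  have hb2 : (0:ℝ) < b^2 := by positivity
  rw [div_pow, div_pow]
  apply inv_anti₀ (by positivity)
  gcongr

lemma Lg_anti (a b : ℝ) (hb : 0 < b) {x y : ℝ} (hx : a ≤ x) (hxy : x ≤ y) :
    Lg a b y ≤ Lg a b x := by
  unfold Lg
  have h2 : (x - a)^2 ≤ (y - a)^2 := by nlinarith
  rw [div_pow, div_pow]
  apply inv_anti₀ (by positivity)
  gcongr

lemma lorentz_sum (a b : ℝ) (hb : 0 < b) (s : Finset ℤ) :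
    ∑ k ∈ s, Lg a b k ≤ 1 + b * π := by
  classical
  set n : ℤ := ⌊a⌋ with hn
  have hna : (n:ℝ) ≤ a := Int.floor_le a
  have han : a ≤ (n:ℝ) + 1 := le_of_lt (Int.lt_floor_add_one a)
  set N : ℕ := s.sup fun k => (k - n).natAbs with hN
  -- containment
  have hsub : s ⊆ Finset.Icc (n - N) (n + 1 + N) := by
    intro k hk
    have h1 : (k - n).natAbs ≤ N := Finset.le_sup (f := fun k => (k - n).natAbs) hk
    rw [Finset.mem_Icc]; omega
  have step1 : ∑ k ∈ s, Lg a b k ≤ ∑ k ∈ Finset.Icc (n - N) (n + 1 + N), Lg a b k :=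
    Finset.sum_le_sum_of_subset_of_nonneg hsub (fun k _ _ => Lg_nonneg a b k)
  -- decompose
  have hL : Finset.Icc (n - N) (n - 1)
      = (Finset.range N).map ⟨fun i : ℕ => n - N + i,
          show Function.Injective (fun i : ℕ => n - N + (i : ℤ)) from
            fun x y h => by simp only [add_right_inj, Int.ofNat_inj] at h; exact_mod_cast h⟩ := by
    ext k; simp only [Finset.mem_Icc, Finset.mem_map, Finset.mem_range,
      Function.Embedding.coeFn_mk]
    constructor
    · rintro ⟨h1, h2⟩; exact ⟨(k - (n - N)).toNat, by omega, by omega⟩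
    · rintro ⟨i, hi, rfl⟩; omega
  have hR : Finset.Icc (n + 2) (n + 1 + N)
      = (Finset.range N).map ⟨fun i : ℕ => n + 2 + i,
          show Function.Injective (fun i : ℕ => n + 2 + (i : ℤ)) from
            fun x y h => by simp only [add_right_inj, Int.ofNat_inj] at h; exact_mod_cast h⟩ := by
    ext k; simp only [Finset.mem_Icc, Finset.mem_map, Finset.mem_range,
      Function.Embedding.coeFn_mk]
    constructor
    · rintro ⟨h1, h2⟩; exact ⟨(k - (n + 2)).toNat, by omega, by omega⟩
    · rintro ⟨i, hi, rfl⟩; omega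
  have hdecomp : Finset.Icc (n - (N:ℤ)) (n + 1 + N)
      = (Finset.Icc (n - N) (n - 1) ∪ ({n, n+1} : Finset ℤ)) ∪ Finset.Icc (n + 2) (n + 1 + N) := by
    ext k
    simp [Finset.mem_Icc, Finset.mem_union, Finset.mem_insert]
    omega
  have hd1 : Disjoint (Finset.Icc (n - (N:ℤ)) (n - 1)) ({n, n+1} : Finset ℤ) := by
    rw [Finset.disjoint_left]; intro k hk hk2
    simp [Finset.mem_Icc] at hk; simp at hk2; omega
  have hd2 : Disjoint (Finset.Icc (n - (N:ℤ)) (n - 1) ∪ ({n, n+1} : Finset ℤ))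
      (Finset.Icc (n + 2) (n + 1 + N)) := by
    rw [Finset.disjoint_left]; intro k hk hk2
    simp [Finset.mem_Icc, Finset.mem_union] at hk; simp [Finset.mem_Icc] at hk2; omega
  have hnn1 : (n : ℤ) ≠ n + 1 := by omega
  have step2 : ∑ k ∈ Finset.Icc (n - (N:ℤ)) (n + 1 + N), Lg a b k
      = (∑ i ∈ Finset.range N, Lg a b ((n:ℝ) - N + i))
        + (Lg a b n + Lg a b ((n:ℝ)+1))
        + ∑ i ∈ Finset.range N, Lg a b ((n:ℝ) + 2 + i) := by
    rw [hdecomp, Finset.sum_union hd2, Finset.sum_union hd1, hL, hR,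
      Finset.sum_map, Finset.sum_map, Finset.sum_pair hnn1]
    simp only [Function.Embedding.coeFn_mk]
    push_cast
    ring_nf
  -- left chunk
  have hmonoL : MonotoneOn (Lg a b) (Set.Icc ((n:ℝ) - N) (((n:ℝ) - N) + N)) := by
    intro x hx y hy hxy
    refine Lg_mono a b hb hxy (le_trans ?_ hna)
    have := hy.2; linarith
  have hleft : (∑ i ∈ Finset.range N, Lg a b (((n:ℝ) - N) + i))
      ≤ b * arctan (((n:ℝ) - a)/b) + b * (π/2) := by
    refine hmonoL.sum_le_integral.trans ?_
    rw [Lg_int a b hb]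
    have h1 : -(π/2) < arctan ((((n:ℝ) - N) - a)/b) := neg_pi_div_two_lt_arctan _
    have h2 : (((n:ℝ) - N) + N - a)/b = ((n:ℝ) - a)/b := by ring
    rw [h2]
    nlinarith
  -- right chunk
  have hantiR : AntitoneOn (Lg a b) (Set.Icc ((n:ℝ) + 1) (((n:ℝ) + 1) + N)) := by
    intro x hx y hy hxy
    exact Lg_anti a b hb (le_trans han hx.1) hxy
  have hright : (∑ i ∈ Finset.range N, Lg a b ((n:ℝ) + 2 + i))
      ≤ b * (π/2) - b * arctan (((n:ℝ) + 1 - a)/b) := by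
    have heq : (∑ i ∈ Finset.range N, Lg a b ((n:ℝ) + 2 + i))
        = ∑ i ∈ Finset.range N, Lg a b (((n:ℝ) + 1) + ((i + 1 : ℕ) : ℝ)) := by
      refine Finset.sum_congr rfl fun i _ => ?_
      congr 1; push_cast; ring
    rw [heq]
    refine hantiR.sum_le_integral.trans ?_
    rw [Lg_int a b hb]
    have h1 : arctan ((((n:ℝ) + 1) + N - a)/b) < π/2 := arctan_lt_pi_div_two _
    nlinarith
  -- middle
  have hmid : Lg a b n + Lg a b ((n:ℝ) + 1)
      ≤ 1 + (b * arctan (((n:ℝ) + 1 - a)/b) - b * arctan (((n:ℝ) - a)/b)) := by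
    have hminle : min (Lg a b n) (Lg a b ((n:ℝ) + 1))
        ≤ b * (arctan (((n:ℝ) + 1 - a)/b) - arctan (((n:ℝ) - a)/b)) := by
      rw [← Lg_int a b hb]
      have hc : ∫ x in (n:ℝ)..((n:ℝ)+1), (fun _ : ℝ => min (Lg a b n) (Lg a b ((n:ℝ) + 1))) x
          = min (Lg a b n) (Lg a b ((n:ℝ) + 1)) := by
        rw [intervalIntegral.integral_const]; simp
      rw [← hc]
      refine intervalIntegral.integral_mono_on (by linarith) (intervalIntegrable_const)
        ((Lg_cont a b).intervalIntegrable _ _) ?_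
      intro x hx
      rcases le_total x a with hxa | hax
      · exact le_trans (min_le_left _ _) (Lg_mono a b hb hx.1 hxa)
      · exact le_trans (min_le_right _ _) (Lg_anti a b hb hax hx.2)
    rcases le_total (Lg a b n) (Lg a b ((n:ℝ) + 1)) with h | h
    · rw [min_eq_left h] at hminle
      have := Lg_le_one a b ((n:ℝ) + 1); linarith
    · rw [min_eq_right h] at hminle
      have := Lg_le_one a b (n:ℝ); linarith
  calc ∑ k ∈ s, Lg a b k ≤ _ := step1
    _ = _ := step2
    _ ≤ 1 + b * π := by linarith



lemma term_norm (c : ℤ → ℂ) (k : ℤ) (t : ℝ) :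
    ‖c k * Complex.exp (Complex.I * t * k)‖ = ‖c k‖ := by
  rw [norm_mul]
  have h : Complex.I * t * k = ((t * k : ℝ) : ℂ) * Complex.I := by push_cast; ring
  rw [h]; simp only [Complex.norm_exp_ofReal_mul_I, mul_one]

lemma sum_cont (c : ℤ → ℂ) (h : Summable fun k => ‖c k‖) :
    Continuous fun t : ℝ => ∑' k : ℤ, c k * Complex.exp (Complex.I * t * k) := by
  refine continuous_tsum (fun k => ?_) h (fun k t => le_of_eq (term_norm c k t))
  fun_prop

lemma parseval (c : ℤ → ℂ) (h : Summable fun k => ‖c k‖) :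
    ∫ t in (-π)..π, ‖∑' k : ℤ, c k * Complex.exp (Complex.I * t * k)‖ ^ 2
      = 2 * π * ∑' k : ℤ, ‖c k‖ ^ 2 := by
  have hπ : (-π) ≤ π := by linarith [pi_pos]
  set f : ℝ → ℂ := fun t => ∑' k : ℤ, c k * Complex.exp (Complex.I * t * k) with hf
  have hcont : Continuous f := sum_cont c h
  -- conjugate expansion
  have hconj : ∀ t : ℝ, (starRingEnd ℂ) (f t)
      = ∑' k : ℤ, (starRingEnd ℂ) (c k) * Complex.exp (-(Complex.I * t * k)) := by
    intro t
    rw [hf]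
    calc (starRingEnd ℂ) (∑' k : ℤ, c k * Complex.exp (Complex.I * t * k))
        = ∑' k : ℤ, (starRingEnd ℂ) (c k * Complex.exp (Complex.I * t * k)) := tsum_star
      _ = _ := by
          refine tsum_congr fun k => ?_
          rw [map_mul, ← Complex.exp_conj]
          congr 1
          simp only [map_mul, Complex.conj_I, Complex.conj_ofReal, map_intCast]
          ring
  have hF1 : ∀ t : ℝ, f t * (starRingEnd ℂ) (f t)
      = ∑' p : ℤ × ℤ, (c p.1 * (starRingEnd ℂ) (c p.2))
          * Complex.exp (Complex.I * t * ((p.1 : ℂ) - (p.2 : ℂ))) := by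
    intro t
    rw [hconj t, hf]
    rw [tsum_mul_tsum_of_summable_norm
      (by simpa only [term_norm] using h)
      (by
        have : ∀ k : ℤ, ‖(starRingEnd ℂ) (c k) * Complex.exp (-(Complex.I * t * k))‖ = ‖c k‖ := by
          intro k
          rw [norm_mul, RCLike.norm_conj]
          have h2 : -(Complex.I * t * k) = ((-(t * k) : ℝ) : ℂ) * Complex.I := by push_cast; ring
          rw [h2]; simp only [Complex.norm_exp_ofReal_mul_I, mul_one]
        simpa only [this] using h)]
    refine tsum_congr fun p => ?_
    rw [mul_mul_mul_comm, ← Complex.exp_add]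
    congr 1
    ring
  -- the complex integral
  have hnt : ∀ (p : ℤ × ℤ) (t : ℝ),
      ‖(c p.1 * (starRingEnd ℂ) (c p.2)) * Complex.exp (Complex.I * t * ((p.1 : ℂ) - (p.2 : ℂ)))‖
        = ‖c p.1‖ * ‖c p.2‖ := by
    intro p t
    have h2 : Complex.I * t * ((p.1 : ℂ) - (p.2 : ℂ)) = ((t * (p.1 - p.2) : ℝ) : ℂ) * Complex.I := by
      push_cast; ring
    rw [norm_mul, norm_mul, RCLike.norm_conj, h2]
    simp only [Complex.norm_exp_ofReal_mul_I, mul_one]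
  have hmeas : ∀ p : ℤ × ℤ, AEStronglyMeasurable
      (fun t : ℝ => (c p.1 * (starRingEnd ℂ) (c p.2))
        * Complex.exp (Complex.I * t * ((p.1 : ℂ) - (p.2 : ℂ))))
      (volume.restrict (Set.Ioc (-π) π)) := by
    intro p
    exact (Continuous.aestronglyMeasurable (by fun_prop))
  have hsum2 : Summable fun p : ℤ × ℤ => ‖c p.1‖ * ‖c p.2‖ * (2 * π) :=
    (h.mul_of_nonneg h (fun k => norm_nonneg _) (fun k => norm_nonneg _)).mul_right _
  have hbound : (∑' p : ℤ × ℤ, ∫⁻ t in Set.Ioc (-π) π,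
      ‖(c p.1 * (starRingEnd ℂ) (c p.2))
        * Complex.exp (Complex.I * t * ((p.1 : ℂ) - (p.2 : ℂ)))‖₊) ≠ ⊤ := by
    have heval : ∀ p : ℤ × ℤ, (∫⁻ t in Set.Ioc (-π) π,
        ‖(c p.1 * (starRingEnd ℂ) (c p.2))
          * Complex.exp (Complex.I * t * ((p.1 : ℂ) - (p.2 : ℂ)))‖₊)
        = ENNReal.ofReal (‖c p.1‖ * ‖c p.2‖ * (2 * π)) := by
      intro p
      have hfun : (fun t : ℝ => (‖(c p.1 * (starRingEnd ℂ) (c p.2))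
          * Complex.exp (Complex.I * t * ((p.1 : ℂ) - (p.2 : ℂ)))‖₊ : ENNReal))
          = fun _ : ℝ => ENNReal.ofReal (‖c p.1‖ * ‖c p.2‖) := by
        funext t
        rw [← ENNReal.ofReal_coe_nnreal, coe_nnnorm, hnt]
      rw [hfun, MeasureTheory.setLIntegral_const, Real.volume_Ioc,
        ← ENNReal.ofReal_mul (by positivity)]
      congr 1
      ring
    simp only [heval]
    rw [← ENNReal.ofReal_tsum_of_nonneg (fun p => by positivity) hsum2]
    exact ENNReal.ofReal_ne_top
  have h3 : ∀ p : ℤ × ℤ, (∫ t in Set.Ioc (-π) π,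
      (c p.1 * (starRingEnd ℂ) (c p.2)) * Complex.exp (Complex.I * t * ((p.1 : ℂ) - (p.2 : ℂ))))
      = if p.1 = p.2 then ((2 * π : ℝ) : ℂ) * (c p.1 * (starRingEnd ℂ) (c p.2)) else 0 := by
    intro p
    rw [← intervalIntegral.integral_of_le hπ, intervalIntegral.integral_const_mul]
    by_cases hp : p.1 = p.2
    · rw [if_pos hp, hp, sub_self]
      simp only [mul_zero, Complex.exp_zero]
      rw [intervalIntegral.integral_const, Complex.real_smul]
      push_cast
      ring
    · rw [if_neg hp]
      have hm : ((p.1 : ℂ) - (p.2 : ℂ)) ≠ 0 := by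
        rw [sub_ne_zero]
        exact_mod_cast hp
      have hc : Complex.I * ((p.1 : ℂ) - (p.2 : ℂ)) ≠ 0 := mul_ne_zero Complex.I_ne_zero hm
      have hrw : ∀ t : ℝ, Complex.I * (t : ℂ) * ((p.1 : ℂ) - (p.2 : ℂ))
          = (Complex.I * ((p.1 : ℂ) - (p.2 : ℂ))) * (t : ℂ) := fun t => by ring
      simp_rw [hrw]
      rw [integral_exp_mul_complex hc]
      have hnum : Complex.exp (Complex.I * ((p.1 : ℂ) - (p.2 : ℂ)) * (π : ℂ))
          = Complex.exp (Complex.I * ((p.1 : ℂ) - (p.2 : ℂ)) * ((-π : ℝ) : ℂ)) := by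
        have harg : Complex.I * ((p.1 : ℂ) - (p.2 : ℂ)) * (π : ℂ)
            = Complex.I * ((p.1 : ℂ) - (p.2 : ℂ)) * ((-π : ℝ) : ℂ)
              + ((p.1 - p.2 : ℤ) : ℂ) * (2 * (π : ℂ) * Complex.I) := by
          push_cast; ring
        rw [harg, Complex.exp_add, Complex.exp_int_mul_two_pi_mul_I, mul_one]
      rw [hnum, sub_self, zero_div, mul_zero]
  have hsumsq : Summable fun k : ℤ => ‖c k‖ ^ 2 := by
    refine Summable.of_nonneg_of_le (fun k => sq_nonneg _) (fun k => ?_) (h.mul_left (∑' j, ‖c j‖))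
    rw [sq]
    exact mul_le_mul_of_nonneg_right (Summable.le_tsum h k fun _ _ => norm_nonneg _) (norm_nonneg _)
  have h4 : (∑' p : ℤ × ℤ, (if p.1 = p.2
        then ((2 * π : ℝ) : ℂ) * (c p.1 * (starRingEnd ℂ) (c p.2)) else 0))
      = ((2 * π * ∑' k : ℤ, ‖c k‖ ^ 2 : ℝ) : ℂ) := by
    set F : ℤ × ℤ → ℂ := fun p => if p.1 = p.2
        then ((2 * π : ℝ) : ℂ) * (c p.1 * (starRingEnd ℂ) (c p.2)) else 0 with hFdef
    have hinj : Function.Injective (fun k : ℤ => ((k, k) : ℤ × ℤ)) :=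
      fun x y hxy => congrArg Prod.fst hxy
    have hsupp : Function.support F ⊆ Set.range (fun k : ℤ => ((k, k) : ℤ × ℤ)) := by
      intro p hp
      rw [Function.mem_support] at hp
      have hpe : p.1 = p.2 := by
        by_contra hne
        exact hp (if_neg hne)
      exact ⟨p.1, Prod.ext rfl hpe⟩
    rw [← hinj.tsum_eq hsupp]
    calc ∑' k : ℤ, F (k, k)
        = ∑' k : ℤ, ((2 * π : ℝ) : ℂ) * ((‖c k‖ ^ 2 : ℝ) : ℂ) := by
          refine tsum_congr fun k => ?_
          have hFk : F (k, k) = ((2 * π : ℝ) : ℂ) * (c k * (starRingEnd ℂ) (c k)) := if_pos rfl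
          rw [hFk, Complex.mul_conj]
          congr 1
          rw [Complex.normSq_eq_norm_sq]
      _ = ((2 * π * ∑' k : ℤ, ‖c k‖ ^ 2 : ℝ) : ℂ) := by
          rw [tsum_mul_left, ← Complex.ofReal_tsum]
          push_cast
          ring
  have hint : IntegrableOn (fun t => f t * (starRingEnd ℂ) (f t)) (Set.Ioc (-π) π) volume :=
    (hcont.mul ((Complex.conjCLE.continuous).comp hcont)).integrableOn_Ioc
  have hcomplex : (∫ t in Set.Ioc (-π) π, f t * (starRingEnd ℂ) (f t))
      = ((2 * π * ∑' k : ℤ, ‖c k‖ ^ 2 : ℝ) : ℂ) := by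
    calc (∫ t in Set.Ioc (-π) π, f t * (starRingEnd ℂ) (f t))
        = ∫ t in Set.Ioc (-π) π, ∑' p : ℤ × ℤ, (c p.1 * (starRingEnd ℂ) (c p.2))
            * Complex.exp (Complex.I * t * ((p.1 : ℂ) - (p.2 : ℂ))) := by
          exact integral_congr_ae (Filter.Eventually.of_forall fun t => hF1 t)
      _ = ∑' p : ℤ × ℤ, ∫ t in Set.Ioc (-π) π, (c p.1 * (starRingEnd ℂ) (c p.2))
            * Complex.exp (Complex.I * t * ((p.1 : ℂ) - (p.2 : ℂ))) :=
          MeasureTheory.integral_tsum hmeas hbound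
      _ = ∑' p : ℤ × ℤ, (if p.1 = p.2
            then ((2 * π : ℝ) : ℂ) * (c p.1 * (starRingEnd ℂ) (c p.2)) else 0) := tsum_congr h3
      _ = _ := h4
  have habs2 : ∀ t : ℝ, ‖f t‖ ^ 2 = (f t * (starRingEnd ℂ) (f t)).re := by
    intro t
    rw [Complex.mul_conj, Complex.ofReal_re, Complex.normSq_eq_norm_sq]
  rw [intervalIntegral.integral_of_le hπ]
  calc ∫ t in Set.Ioc (-π) π, ‖f t‖ ^ 2
      = ∫ t in Set.Ioc (-π) π, (f t * (starRingEnd ℂ) (f t)).re := by simp only [habs2]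
    _ = (∫ t in Set.Ioc (-π) π, f t * (starRingEnd ℂ) (f t)).re := by
        have := integral_re hint
        simpa using this
    _ = 2 * π * ∑' k : ℤ, ‖c k‖ ^ 2 := by rw [hcomplex, Complex.ofReal_re]

lemma deriv_formula (M : ℤ → ℝ) (habs : Summable fun k : ℤ => |M k|)
    (hmom : Summable fun k : ℤ => |(k : ℝ)| * |M k|) (a : ℝ) (t : ℝ) :
    deriv (fun s : ℝ => Complex.exp (-Complex.I * s * a) *
        ∑' k : ℤ, (M k : ℂ) * Complex.exp (Complex.I * s * k)) t
      = Complex.exp (-Complex.I * t * a) *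
        ∑' k : ℤ, (Complex.I * ((k : ℂ) - (a : ℂ)) * (M k : ℂ))
          * Complex.exp (Complex.I * t * k) := by
  have hrw : (fun s : ℝ => Complex.exp (-Complex.I * s * a) *
        ∑' k : ℤ, (M k : ℂ) * Complex.exp (Complex.I * s * k))
      = fun s : ℝ => ∑' k : ℤ, (M k : ℂ)
          * Complex.exp ((Complex.I * ((k : ℂ) - (a : ℂ))) * s) := by
    funext s
    rw [← tsum_mul_left]
    refine tsum_congr fun k => ?_
    rw [mul_left_comm, ← Complex.exp_add]
    congr 2
    ring
  have hderiv : ∀ (k : ℤ) (s : ℝ), HasDerivAt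
      (fun y : ℝ => (M k : ℂ) * Complex.exp ((Complex.I * ((k : ℂ) - (a : ℂ))) * y))
      ((M k : ℂ) * ((Complex.I * ((k : ℂ) - (a : ℂ)))
        * Complex.exp ((Complex.I * ((k : ℂ) - (a : ℂ))) * s))) s := by
    intro k s
    set z := Complex.I * ((k : ℂ) - (a : ℂ)) with hz
    have h1 : HasDerivAt (fun y : ℂ => Complex.exp (z * y)) (z * Complex.exp (z * s)) (s : ℂ) := by
      have h2 := (Complex.hasDerivAt_exp (z * s)).comp (s : ℂ) ((hasDerivAt_id (s : ℂ)).const_mul z)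
      have h2' : HasDerivAt (fun y : ℂ => Complex.exp (z * y))
          (Complex.exp (z * (s : ℂ)) * (z * 1)) (s : ℂ) := h2
      convert h2' using 1
      ring
    exact (h1.comp_ofReal).const_mul (M k : ℂ)
  have hu : Summable fun k : ℤ => |(k : ℝ)| * |M k| + |a| * |M k| :=
    hmom.add (habs.mul_left |a|)
  have hnormz : ∀ k : ℤ, ‖Complex.I * ((k : ℂ) - (a : ℂ))‖ = |(k : ℝ) - a| := by
    intro k
    rw [norm_mul, Complex.norm_I, one_mul]
    have : ((k : ℂ) - (a : ℂ)) = (((k : ℝ) - a : ℝ) : ℂ) := by push_cast; ring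
    rw [this, Complex.norm_real, Real.norm_eq_abs]
  have hexp1 : ∀ (k : ℤ) (s : ℝ),
      ‖Complex.exp ((Complex.I * ((k : ℂ) - (a : ℂ))) * s)‖ = 1 := by
    intro k s
    have : (Complex.I * ((k : ℂ) - (a : ℂ))) * s = ((((k : ℝ) - a) * s : ℝ) : ℂ) * Complex.I := by
      push_cast; ring
    rw [this, Complex.norm_exp_ofReal_mul_I]
  have hb : ∀ (k : ℤ) (s : ℝ),
      ‖(M k : ℂ) * ((Complex.I * ((k : ℂ) - (a : ℂ)))
        * Complex.exp ((Complex.I * ((k : ℂ) - (a : ℂ))) * s))‖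
      ≤ |(k : ℝ)| * |M k| + |a| * |M k| := by
    intro k s
    rw [norm_mul, norm_mul, hnormz, hexp1, mul_one, Complex.norm_real, Real.norm_eq_abs]
    have h1 : |(k : ℝ) - a| ≤ |(k : ℝ)| + |a| := abs_sub (k : ℝ) a
    calc |M k| * |(k : ℝ) - a| ≤ |M k| * (|(k : ℝ)| + |a|) :=
          mul_le_mul_of_nonneg_left h1 (abs_nonneg _)
      _ = |(k : ℝ)| * |M k| + |a| * |M k| := by ring
  have hg0 : Summable fun k : ℤ =>
      (M k : ℂ) * Complex.exp ((Complex.I * ((k : ℂ) - (a : ℂ))) * ((0 : ℝ) : ℂ)) := by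
    apply Summable.of_norm
    have : ∀ k : ℤ, ‖(M k : ℂ) * Complex.exp ((Complex.I * ((k : ℂ) - (a : ℂ))) * ((0 : ℝ) : ℂ))‖
        = |M k| := by
      intro k
      rw [norm_mul]
      have h0 : ((0 : ℝ) : ℂ) = ((0 : ℝ) : ℂ) := rfl
      rw [show ((Complex.I * ((k : ℂ) - (a : ℂ))) * ((0 : ℝ) : ℂ)) = 0 by push_cast; ring]
      simp [Complex.norm_real, Real.norm_eq_abs]
    simpa only [this] using habs
  have HD := hasDerivAt_tsum hu hderiv hb hg0 t
  rw [hrw, HD.deriv]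
  rw [← tsum_mul_left]
  refine tsum_congr fun k => ?_
  rw [show (Complex.I * ((k : ℂ) - (a : ℂ))) * (t : ℂ)
      = (-Complex.I * t * a) + (Complex.I * t * k) by push_cast; ring, Complex.exp_add]
  ring

theorem tv_inversion_inequality (M : ℤ → ℝ)
    (habs : Summable fun k : ℤ => |M k|)
    (hmom : Summable fun k : ℤ => |(k : ℝ)| * |M k|)
    (a : ℝ) (b : ℝ) (hb : 0 < b) :
    (∑' k : ℤ, |M k|) ≤
      Real.sqrt (1 + b * π) *
        Real.sqrt ((1 / (2 * π)) * ∫ t in (-π)..π,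
          ‖∑' k : ℤ, (M k : ℂ) * Complex.exp (Complex.I * t * k)‖ ^ 2 +
          b⁻¹ ^ 2 * ‖deriv (fun s : ℝ =>
            Complex.exp (-Complex.I * s * a) *
              ∑' k : ℤ, (M k : ℂ) * Complex.exp (Complex.I * s * k)) t‖ ^ 2) := by
  have hπ0 : 0 < π := pi_pos
  -- coefficients
  have hc : Summable fun k : ℤ => ‖((M k : ℝ) : ℂ)‖ := by
    simpa only [Complex.norm_real, Real.norm_eq_abs] using habs
  have hdnorm : ∀ k : ℤ, ‖Complex.I * ((k : ℂ) - (a : ℂ)) * ((M k : ℝ) : ℂ)‖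
      = |(k : ℝ) - a| * |M k| := by
    intro k
    rw [norm_mul, norm_mul, Complex.norm_I, one_mul]
    rw [show ((k : ℂ) - (a : ℂ)) = (((k : ℝ) - a : ℝ) : ℂ) by push_cast; ring]
    rw [Complex.norm_real, Complex.norm_real, Real.norm_eq_abs, Real.norm_eq_abs]
  have hu : Summable fun k : ℤ => |(k : ℝ)| * |M k| + |a| * |M k| :=
    hmom.add (habs.mul_left |a|)
  have hd : Summable fun k : ℤ => ‖Complex.I * ((k : ℂ) - (a : ℂ)) * ((M k : ℝ) : ℂ)‖ := by
    refine Summable.of_nonneg_of_le (fun k => norm_nonneg _) (fun k => ?_) hu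
    rw [hdnorm]
    have h1 : |(k : ℝ) - a| ≤ |(k : ℝ)| + |a| := abs_sub (k : ℝ) a
    calc |(k : ℝ) - a| * |M k| ≤ (|(k : ℝ)| + |a|) * |M k| :=
          mul_le_mul_of_nonneg_right h1 (abs_nonneg _)
      _ = |(k : ℝ)| * |M k| + |a| * |M k| := by ring
  -- squared summabilities
  have sumsq : ∀ (g : ℤ → ℝ), (∀ k, 0 ≤ g k) → Summable g → Summable fun k => g k ^ 2 := by
    intro g hg hs
    refine Summable.of_nonneg_of_le (fun k => sq_nonneg _) (fun k => ?_) (hs.mul_left (∑' j, g j))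
    rw [sq]
    exact mul_le_mul_of_nonneg_right (Summable.le_tsum hs k fun _ _ => hg _) (hg _)
  have hcsq : Summable fun k : ℤ => ‖((M k : ℝ) : ℂ)‖ ^ 2 :=
    sumsq _ (fun k => norm_nonneg _) hc
  have hdsq : Summable fun k : ℤ => ‖Complex.I * ((k : ℂ) - (a : ℂ)) * ((M k : ℝ) : ℂ)‖ ^ 2 :=
    sumsq _ (fun k => norm_nonneg _) hd
  -- v
  set v : ℤ → ℝ := fun k => (1 + b⁻¹ ^ 2 * ((k : ℝ) - a) ^ 2) * (M k) ^ 2 with hvdef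
  have hveq : ∀ k : ℤ, v k = ‖((M k : ℝ) : ℂ)‖ ^ 2
      + b⁻¹ ^ 2 * ‖Complex.I * ((k : ℂ) - (a : ℂ)) * ((M k : ℝ) : ℂ)‖ ^ 2 := by
    intro k
    rw [hvdef, hdnorm, Complex.norm_real, Real.norm_eq_abs, mul_pow, sq_abs, sq_abs]
    ring
  have hv : Summable v := by
    rw [show v = fun k => ‖((M k : ℝ) : ℂ)‖ ^ 2
      + b⁻¹ ^ 2 * ‖Complex.I * ((k : ℂ) - (a : ℂ)) * ((M k : ℝ) : ℂ)‖ ^ 2 from funext hveq]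
    exact hcsq.add (hdsq.mul_left _)
  have hvnonneg : ∀ k, 0 ≤ v k := by
    intro k; rw [hvdef]; positivity
  -- integral evaluation
  have hptwise : ∀ t : ℝ,
      ‖∑' k : ℤ, (M k : ℂ) * Complex.exp (Complex.I * t * k)‖ ^ 2 +
        b⁻¹ ^ 2 * ‖deriv (fun s : ℝ =>
          Complex.exp (-Complex.I * s * a) *
            ∑' k : ℤ, (M k : ℂ) * Complex.exp (Complex.I * s * k)) t‖ ^ 2
      = ‖∑' k : ℤ, ((M k : ℝ) : ℂ) * Complex.exp (Complex.I * t * k)‖ ^ 2 +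
        b⁻¹ ^ 2 * ‖∑' k : ℤ, (Complex.I * ((k : ℂ) - (a : ℂ)) * ((M k : ℝ) : ℂ))
          * Complex.exp (Complex.I * t * k)‖ ^ 2 := by
    intro t
    rw [deriv_formula M habs hmom a t]
    rw [norm_mul]
    have he : ‖Complex.exp (-Complex.I * t * a)‖ = 1 := by
      rw [show -Complex.I * (t : ℂ) * (a : ℂ) = ((-(t * a) : ℝ) : ℂ) * Complex.I by
        push_cast; ring]
      exact Complex.norm_exp_ofReal_mul_I _
    rw [he, one_mul]
  have hcong : ∫ t in (-π)..π,
      (‖∑' k : ℤ, (M k : ℂ) * Complex.exp (Complex.I * t * k)‖ ^ 2 +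
        b⁻¹ ^ 2 * ‖deriv (fun s : ℝ =>
          Complex.exp (-Complex.I * s * a) *
            ∑' k : ℤ, (M k : ℂ) * Complex.exp (Complex.I * s * k)) t‖ ^ 2)
      = ∫ t in (-π)..π,
        (‖∑' k : ℤ, ((M k : ℝ) : ℂ) * Complex.exp (Complex.I * t * k)‖ ^ 2 +
         b⁻¹ ^ 2 * ‖∑' k : ℤ, (Complex.I * ((k : ℂ) - (a : ℂ)) * ((M k : ℝ) : ℂ))
           * Complex.exp (Complex.I * t * k)‖ ^ 2) :=
    intervalIntegral.integral_congr (fun t _ => hptwise t)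
  have hi1 : IntervalIntegrable
      (fun t : ℝ => ‖∑' k : ℤ, ((M k : ℝ) : ℂ) * Complex.exp (Complex.I * t * k)‖ ^ 2)
      volume (-π) π := (((sum_cont _ hc).norm).pow 2).intervalIntegrable _ _
  have hi2 : IntervalIntegrable
      (fun t : ℝ => b⁻¹ ^ 2 * ‖∑' k : ℤ, (Complex.I * ((k : ℂ) - (a : ℂ)) * ((M k : ℝ) : ℂ))
        * Complex.exp (Complex.I * t * k)‖ ^ 2) volume (-π) π :=
    (continuous_const.mul (((sum_cont _ hd).norm).pow 2)).intervalIntegrable _ _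
  have hsplit : ∫ t in (-π)..π,
        (‖∑' k : ℤ, ((M k : ℝ) : ℂ) * Complex.exp (Complex.I * t * k)‖ ^ 2 +
         b⁻¹ ^ 2 * ‖∑' k : ℤ, (Complex.I * ((k : ℂ) - (a : ℂ)) * ((M k : ℝ) : ℂ))
           * Complex.exp (Complex.I * t * k)‖ ^ 2)
      = (2 * π * ∑' k : ℤ, ‖((M k : ℝ) : ℂ)‖ ^ 2)
        + b⁻¹ ^ 2 * (2 * π * ∑' k : ℤ,
            ‖Complex.I * ((k : ℂ) - (a : ℂ)) * ((M k : ℝ) : ℂ)‖ ^ 2) := by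
    rw [intervalIntegral.integral_add hi1 hi2, intervalIntegral.integral_const_mul,
      parseval _ hc, parseval _ hd]
  have hSint : (1 / (2 * π)) * (∫ t in (-π)..π,
      (‖∑' k : ℤ, (M k : ℂ) * Complex.exp (Complex.I * t * k)‖ ^ 2 +
        b⁻¹ ^ 2 * ‖deriv (fun s : ℝ =>
          Complex.exp (-Complex.I * s * a) *
            ∑' k : ℤ, (M k : ℂ) * Complex.exp (Complex.I * s * k)) t‖ ^ 2))
      = ∑' k, v k := by
    rw [hcong, hsplit]
    have htv : ∑' k, v k = (∑' k : ℤ, ‖((M k : ℝ) : ℂ)‖ ^ 2)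
        + b⁻¹ ^ 2 * ∑' k : ℤ, ‖Complex.I * ((k : ℂ) - (a : ℂ)) * ((M k : ℝ) : ℂ)‖ ^ 2 := by
      calc ∑' k, v k = ∑' k, (‖((M k : ℝ) : ℂ)‖ ^ 2
          + b⁻¹ ^ 2 * ‖Complex.I * ((k : ℂ) - (a : ℂ)) * ((M k : ℝ) : ℂ)‖ ^ 2) :=
            tsum_congr hveq
        _ = _ := by
            rw [Summable.tsum_add hcsq (hdsq.mul_left _), tsum_mul_left]
    rw [htv]
    field_simp
  rw [hSint]
  -- Cauchy-Schwarz
  have hcs : ∀ s : Finset ℤ, ∑ k ∈ s, |M k| ≤ Real.sqrt (1 + b * π) * Real.sqrt (∑' k, v k) := by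
    intro s
    have hLg : ∀ k : ℤ, Lg a b k = (1 + b⁻¹ ^ 2 * ((k : ℝ) - a) ^ 2)⁻¹ := by
      intro k
      rw [Lg]
      congr 1
      rw [div_pow]
      ring
    have hterm : ∀ k : ℤ, |M k| = Real.sqrt (Lg a b k) * Real.sqrt (v k) := by
      intro k
      rw [← Real.sqrt_mul (by rw [Lg]; positivity), hLg, hvdef]
      rw [show (1 + b⁻¹ ^ 2 * ((k : ℝ) - a) ^ 2)⁻¹ * ((1 + b⁻¹ ^ 2 * ((k : ℝ) - a) ^ 2) * M k ^ 2)
        = M k ^ 2 by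
          rw [← mul_assoc, inv_mul_cancel₀ (by positivity), one_mul]]
      exact (Real.sqrt_sq_eq_abs _).symm
    have hcs2 : (∑ k ∈ s, |M k|) ^ 2 ≤ (∑ k ∈ s, Lg a b k) * (∑ k ∈ s, v k) := by
      calc (∑ k ∈ s, |M k|) ^ 2
          = (∑ k ∈ s, Real.sqrt (Lg a b k) * Real.sqrt (v k)) ^ 2 := by
            rw [Finset.sum_congr rfl fun k _ => hterm k]
        _ ≤ (∑ k ∈ s, Real.sqrt (Lg a b k) ^ 2) * (∑ k ∈ s, Real.sqrt (v k) ^ 2) :=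
            Finset.sum_mul_sq_le_sq_mul_sq s _ _
        _ = (∑ k ∈ s, Lg a b k) * (∑ k ∈ s, v k) := by
            rw [Finset.sum_congr rfl fun k _ => Real.sq_sqrt (by rw [Lg]; positivity),
              Finset.sum_congr rfl (fun k _ => Real.sq_sqrt (hvnonneg k))]
    have hb1 : (∑ k ∈ s, Lg a b k) ≤ 1 + b * π := lorentz_sum a b hb s
    have hb2 : (∑ k ∈ s, v k) ≤ ∑' k, v k := Summable.sum_le_tsum s (fun k _ => hvnonneg k) hv
    have hfinal : (∑ k ∈ s, |M k|) ^ 2 ≤ (1 + b * π) * ∑' k, v k := by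
      refine hcs2.trans (mul_le_mul hb1 hb2 (Finset.sum_nonneg fun k _ => hvnonneg k) ?_)
      nlinarith
    have hsum_nonneg : 0 ≤ ∑ k ∈ s, |M k| := Finset.sum_nonneg fun k _ => abs_nonneg _
    calc ∑ k ∈ s, |M k| = Real.sqrt ((∑ k ∈ s, |M k|) ^ 2) := (Real.sqrt_sq hsum_nonneg).symm
      _ ≤ Real.sqrt ((1 + b * π) * ∑' k, v k) := Real.sqrt_le_sqrt hfinal
      _ = Real.sqrt (1 + b * π) * Real.sqrt (∑' k, v k) := Real.sqrt_mul (by nlinarith) _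
  exact Summable.tsum_le_of_sum_le habs hcs
end
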